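/- The greedy peeling algorithm, which repeatedly removes from the current set a slice of minimum slice sum and outputs the intermediate set of maximum density, returns a subset whose density is at least ρ_opt / N. -/

import Mathlib

open Finset

variable {α β : Type*}

noncomputable def mass [DecidableEq α] (E : Finset β) (w : β → ℝ)
    (slices : β → Finset α) (S : Finset α) : ℝ :=
  ∑ e ∈ E.filter (fun e => slices e ⊆ S), w e

noncomputable def sliceSum [DecidableEq α] (E : Finset β) (w : β → ℝ)
    (slices : β → Finset α) (S : Finset α) (q : α) : ℝ :=
  ∑ e ∈ E.filter (fun e => slices e ⊆ S ∧ q ∈ slices e), w e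

noncomputable def density [DecidableEq α] (E : Finset β) (w : β → ℝ)
    (slices : β → Finset α) (S : Finset α) : ℝ :=
  mass E w slices S / S.card

def suffixSet [DecidableEq α] {m : ℕ} (π : Fin m → α) (j : Fin m) : Finset α :=
  (Finset.univ.filter (fun i => j ≤ i)).image π

def IsDOrdering [DecidableEq α] (E : Finset β) (w : β → ℝ)
    (slices : β → Finset α) {m : ℕ} (π : Fin m → α) : Prop :=
  ∀ j : Fin m, ∀ r ∈ suffixSet π j,
    sliceSum E w slices (suffixSet π j) (π j) ≤ sliceSum E w slices (suffixSet π j) r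

noncomputable def rhoOpt [DecidableEq α] (Q : Finset α) (E : Finset β) (w : β → ℝ)
    (slices : β → Finset α) : ℝ :=
  sSup {x | ∃ S, S ⊆ Q ∧ S.Nonempty ∧ x = density E w slices S}

noncomputable def dpi [DecidableEq α] (E : Finset β) (w : β → ℝ)
    (slices : β → Finset α) {m : ℕ} (π : Fin m → α) (i : Fin m) : ℝ :=
  sliceSum E w slices (suffixSet π i) (π i)

noncomputable def cpi [DecidableEq α] (E : Finset β) (w : β → ℝ)
    (slices : β → Finset α) {m : ℕ} (π : Fin m → α) (i : Fin m) : ℝ :=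
  (Finset.univ.filter (fun i' : Fin m => i' ≤ i)).sup' ⟨i, by simp⟩ (dpi E w slices π)

lemma mass_nonneg' [DecidableEq α] (E : Finset β) (w : β → ℝ) (slices : β → Finset α)
    (S : Finset α) (hw : ∀ e, 0 ≤ w e) : 0 ≤ mass E w slices S :=
  Finset.sum_nonneg fun e _ => hw e

lemma mass_erase' [DecidableEq α] (E : Finset β) (w : β → ℝ) (slices : β → Finset α)
    (S : Finset α) (q : α) :
    mass E w slices S = mass E w slices (S.erase q) + sliceSum E w slices S q := by
  unfold mass sliceSum
  rw [← Finset.sum_filter_add_sum_filter_not (E.filter (fun e => slices e ⊆ S))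
      (fun e => q ∈ slices e), Finset.filter_filter, Finset.filter_filter, add_comm]
  congr 1
  apply Finset.sum_congr _ (fun _ _ => rfl)
  apply Finset.filter_congr
  intro e _
  simp [Finset.subset_erase, and_comm]

lemma sliceSum_mono' [DecidableEq α] (E : Finset β) (w : β → ℝ) (slices : β → Finset α)
    {S T : Finset α} (hw : ∀ e, 0 ≤ w e) (hST : S ⊆ T) (q : α) :
    sliceSum E w slices S q ≤ sliceSum E w slices T q := by
  apply Finset.sum_le_sum_of_subset_of_nonneg _ (fun e _ _ => hw e)
  apply Finset.monotone_filter_right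
  intro e _ ⟨h1, h2⟩
  exact ⟨h1.trans hST, h2⟩

lemma sum_sliceSum' [DecidableEq α] (E : Finset β) (w : β → ℝ) (slices : β → Finset α)
    (S : Finset α) (N : ℕ) (hcard : ∀ e ∈ E, (slices e).card = N) :
    ∑ q ∈ S, sliceSum E w slices S q = N * mass E w slices S := by
  have key : ∀ q, sliceSum E w slices S q
      = ∑ e ∈ E.filter (fun e => slices e ⊆ S), if q ∈ slices e then w e else 0 := by
    intro q
    rw [sliceSum, ← Finset.filter_filter, Finset.sum_filter]
  simp_rw [key]
  rw [Finset.sum_comm, mass, Finset.mul_sum]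
  apply Finset.sum_congr rfl
  intro e he
  rw [Finset.sum_ite_mem]
  have hsub : slices e ⊆ S := (Finset.mem_filter.mp he).2
  rw [Finset.inter_eq_right.mpr hsub, Finset.sum_const, nsmul_eq_mul,
    hcard e (Finset.mem_filter.mp he).1]

theorem greedy_peeling_guarantee [DecidableEq α] (Q : Finset α) (E : Finset β) (w : β → ℝ)
    (slices : β → Finset α) (N : ℕ) (hN : 1 ≤ N) (hw : ∀ e, 0 ≤ w e)
    (hcard : ∀ e ∈ E, (slices e).card = N) (hQ : Q.Nonempty)
    {m : ℕ} (hm : m = Q.card) (π : Fin m → α)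
    (hinj : Function.Injective π) (himg : Finset.univ.image π = Q)
    (hD : IsDOrdering E w slices π)
    (ρopt : ℝ)
    (hopt₁ : ∃ S, S ⊆ Q ∧ S.Nonempty ∧ density E w slices S = ρopt)
    (hopt₂ : ∀ S ⊆ Q, S.Nonempty → density E w slices S ≤ ρopt)
    (jbest : Fin m)
    (hbest : ∀ j : Fin m, density E w slices (suffixSet π j) ≤ density E w slices (suffixSet π jbest)) :
    ρopt / N ≤ density E w slices (suffixSet π jbest) := by
  obtain ⟨S, hSQ, hSne, hSdens⟩ := hopt₁
  have hρ0 : 0 ≤ ρopt := by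
    rw [← hSdens]
    exact div_nonneg (mass_nonneg' E w slices S hw) (Nat.cast_nonneg _)
  have hScard : 0 < (S.card : ℝ) := by
    exact_mod_cast Finset.card_pos.mpr hSne
  have hSmass : mass E w slices S = ρopt * S.card := by
    rw [← hSdens, density, div_mul_cancel₀]
    exact ne_of_gt hScard
  -- every q in S has slice sum ≥ ρopt
  have hmin : ∀ q ∈ S, ρopt ≤ sliceSum E w slices S q := by
    intro q hq
    have herase : mass E w slices (S.erase q) ≤ ρopt * (S.card - 1) := by
      rcases (S.erase q).eq_empty_or_nonempty with he | hne
      · have h1 : (1 : ℝ) ≤ S.card := by exact_mod_cast Finset.one_le_card.mpr hSne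
        have : mass E w slices (S.erase q) = 0 := by
          rw [he]
          unfold mass
          apply Finset.sum_eq_zero
          intro e he'
          have := (Finset.mem_filter.mp he').2
          have h0 : (slices e).card = N := hcard e (Finset.mem_filter.mp he').1
          rw [Finset.subset_empty.mp this] at h0
          simp at h0
          omega
        rw [this]
        exact mul_nonneg hρ0 (by linarith)
      · have hle := hopt₂ _ ((Finset.erase_subset q S).trans hSQ) hne
        have hc : (0:ℝ) < (S.erase q).card := by
          exact_mod_cast Finset.card_pos.mpr hne
        rw [density, div_le_iff₀ hc] at hle
        have : ((S.erase q).card : ℝ) = S.card - 1 := by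
          rw [Finset.card_erase_of_mem hq]
          have := Finset.one_le_card.mpr hSne
          push_cast [Nat.cast_sub this]
          ring
        rw [this] at hle
        linarith
    have := mass_erase' E w slices S q
    rw [hSmass] at this
    nlinarith
  -- choose first index hitting S
  have hTne : (Finset.univ.filter (fun i : Fin m => π i ∈ S)).Nonempty := by
    obtain ⟨q, hq⟩ := hSne
    have : q ∈ Q := hSQ hq
    rw [← himg] at this
    obtain ⟨i, _, hi⟩ := Finset.mem_image.mp this
    exact ⟨i, Finset.mem_filter.mpr ⟨Finset.mem_univ _, hi ▸ hq⟩⟩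
  set j := (Finset.univ.filter (fun i : Fin m => π i ∈ S)).min' hTne with hj
  have hjS : π j ∈ S := (Finset.mem_filter.mp ((Finset.univ.filter
    (fun i : Fin m => π i ∈ S)).min'_mem hTne)).2
  have hSsub : S ⊆ suffixSet π j := by
    intro q hq
    have : q ∈ Q := hSQ hq
    rw [← himg] at this
    obtain ⟨i, _, hi⟩ := Finset.mem_image.mp this
    have hji : j ≤ i := Finset.min'_le _ i (Finset.mem_filter.mpr ⟨Finset.mem_univ _, hi ▸ hq⟩)
    exact Finset.mem_image.mpr ⟨i, Finset.mem_filter.mpr ⟨Finset.mem_univ _, hji⟩, hi⟩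
  have hjmem : π j ∈ suffixSet π j :=
    Finset.mem_image.mpr ⟨j, Finset.mem_filter.mpr ⟨Finset.mem_univ _, le_refl _⟩, rfl⟩
  have hdj : ρopt ≤ sliceSum E w slices (suffixSet π j) (π j) :=
    (hmin _ hjS).trans (sliceSum_mono' E w slices hw hSsub _)
  have hsumlb : ((suffixSet π j).card : ℝ) * ρopt ≤ ∑ q ∈ suffixSet π j,
      sliceSum E w slices (suffixSet π j) q := by
    calc ((suffixSet π j).card : ℝ) * ρopt = ∑ _q ∈ suffixSet π j, ρopt := by
          rw [Finset.sum_const, nsmul_eq_mul]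
      _ ≤ _ := Finset.sum_le_sum fun r hr => hdj.trans (hD j r hr)
  rw [sum_sliceSum' E w slices _ N hcard] at hsumlb
  have hjcard : (0:ℝ) < (suffixSet π j).card := by
    exact_mod_cast Finset.card_pos.mpr ⟨_, hjmem⟩
  have hNpos : (0:ℝ) < N := by exact_mod_cast hN
  have hdensj : ρopt / N ≤ density E w slices (suffixSet π j) := by
    rw [density, div_le_div_iff₀ hNpos hjcard]
    nlinarith
  exact hdensj.trans (hbest j)
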